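/- If segments [a,b] and [c,d] in the plane intersect at a point x lying in the open segments (a,b) and (c,d), and a, x, c are not collinear and b, x, d are not collinear, then dist(a,c) + dist(b,d) < dist(a,b) + dist(c,d). -/
import Mathlib

abbrev Plane := EuclideanSpace ℝ (Fin 2)

theorem uncrossing_inequality (a b c d x : Plane)
    (hab : x ∈ openSegment ℝ a b) (hcd : x ∈ openSegment ℝ c d)
    (haxc : ¬ Collinear ℝ ({a, x, c} : Set Plane))
    (hbxd : ¬ Collinear ℝ ({b, x, d} : Set Plane)) :
    dist a c + dist b d < dist a b + dist c d := by
  have hab' : Wbtw ℝ a x b := (mem_segment_iff_wbtw).1 (openSegment_subset_segment ℝ a b hab)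
  have hcd' : Wbtw ℝ c x d := (mem_segment_iff_wbtw).1 (openSegment_subset_segment ℝ c d hcd)
  have e1 : dist a x + dist x b = dist a b := dist_add_dist_eq_iff.2 hab'
  have e2 : dist c x + dist x d = dist c d := dist_add_dist_eq_iff.2 hcd'
  have t1 : dist a c < dist a x + dist x c := by
    rcases lt_or_eq_of_le (dist_triangle a x c) with h | h
    · exact h
    · exact absurd (dist_add_dist_eq_iff.1 h.symm).collinear haxc
  have t2 : dist b d < dist b x + dist x d := by
    rcases lt_or_eq_of_le (dist_triangle b x d) with h | h
    · exact h
    · exact absurd (dist_add_dist_eq_iff.1 h.symm).collinear hbxd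
  have := add_lt_add t1 t2
  rw [dist_comm b x] at this
  linarith [dist_comm x c, dist_comm c x]
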